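/- Let k1, k2, k3 be natural numbers with k1 + k2 + k3 = 3. Then the image of the monomial u1^{k1}·u2^{k2}·u3^{k3} in R is nonzero if and only if (k1,k2,k3) is a permutation of (0,1,2), where R is the quotient of F2[u1,u2,u3] by the ideal generated by u1+u2+u3, u1u2+u1u3+u2u3, and u1u2u3. -/

import Mathlib

open MvPolynomial

/-- The ideal generated by the three elementary symmetric polynomials in
`F2[u1,u2,u3]`, with `u1 = X 0`, `u2 = X 1`, `u3 = X 2`. -/
noncomputable abbrev symIdeal : Ideal (MvPolynomial (Fin 3) (ZMod 2)) :=
  Ideal.span ({X 0 + X 1 + X 2,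
               X 0 * X 1 + X 0 * X 2 + X 1 * X 2,
               X 0 * X 1 * X 2} : Set (MvPolynomial (Fin 3) (ZMod 2)))

open MvPolynomial Finsupp

noncomputable def e (a b c : ℕ) : Fin 3 →₀ ℕ :=
  Finsupp.single 0 a + Finsupp.single 1 b + Finsupp.single 2 c

@[simp] lemma e_apply0 (a b c : ℕ) : e a b c 0 = a := by simp [e, Finsupp.single_apply]
@[simp] lemma e_apply1 (a b c : ℕ) : e a b c 1 = b := by simp [e, Finsupp.single_apply]
@[simp] lemma e_apply2 (a b c : ℕ) : e a b c 2 = c := by simp [e, Finsupp.single_apply]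

lemma e_eq_iff {a b c a' b' c' : ℕ} : e a b c = e a' b' c' ↔ a = a' ∧ b = b' ∧ c = c' := by
  constructor
  · intro h
    refine ⟨?_, ?_, ?_⟩
    · simpa using DFunLike.congr_fun h 0
    · simpa using DFunLike.congr_fun h 1
    · simpa using DFunLike.congr_fun h 2
  · rintro ⟨rfl, rfl, rfl⟩; rfl

lemma e_sub0 (a b c : ℕ) : e a b c - Finsupp.single 0 1 = e (a-1) b c := by
  ext x; fin_cases x <;> simp [Finsupp.tsub_apply, Finsupp.single_apply]

lemma e_sub1 (a b c : ℕ) : e a b c - Finsupp.single 1 1 = e a (b-1) c := by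
  ext x; fin_cases x <;> simp [Finsupp.tsub_apply, Finsupp.single_apply]

lemma e_sub2 (a b c : ℕ) : e a b c - Finsupp.single 2 1 = e a b (c-1) := by
  ext x; fin_cases x <;> simp [Finsupp.tsub_apply, Finsupp.single_apply]

lemma mem_support0 (a b c : ℕ) : (0 : Fin 3) ∈ (e a b c).support ↔ a ≠ 0 := by
  simp [Finsupp.mem_support_iff]
lemma mem_support1 (a b c : ℕ) : (1 : Fin 3) ∈ (e a b c).support ↔ b ≠ 0 := by
  simp [Finsupp.mem_support_iff]
lemma mem_support2 (a b c : ℕ) : (2 : Fin 3) ∈ (e a b c).support ↔ c ≠ 0 := by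
  simp [Finsupp.mem_support_iff]

noncomputable def phi (p : MvPolynomial (Fin 3) (ZMod 2)) : ZMod 2 :=
  coeff (e 0 1 2) p + coeff (e 0 2 1) p + coeff (e 1 0 2) p +
  coeff (e 1 2 0) p + coeff (e 2 0 1) p + coeff (e 2 1 0) p

lemma phi_add (p q : MvPolynomial (Fin 3) (ZMod 2)) : phi (p + q) = phi p + phi q := by
  simp [phi, coeff_add]; ring

lemma phi_g1 (p : MvPolynomial (Fin 3) (ZMod 2)) :
    phi (p * (X 0 + X 1 + X 2)) = 0 := by
  have h2 : (2 : ZMod 2) = 0 := rfl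
  simp only [mul_add, phi, coeff_add, coeff_mul_X', mem_support0, mem_support1, mem_support2,
    e_sub0, e_sub1, e_sub2]
  norm_num
  ring_nf
  simp [h2]

lemma phi_g2 (p : MvPolynomial (Fin 3) (ZMod 2)) :
    phi (p * (X 0 * X 1 + X 0 * X 2 + X 1 * X 2)) = 0 := by
  have h2 : (2 : ZMod 2) = 0 := rfl
  simp only [mul_add, phi, coeff_add, ← mul_assoc, coeff_mul_X', mem_support0, mem_support1,
    mem_support2, e_sub0, e_sub1, e_sub2]
  norm_num
  ring_nf
  simp [h2]

lemma phi_g3 (p : MvPolynomial (Fin 3) (ZMod 2)) :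
    phi (p * (X 0 * X 1 * X 2)) = 0 := by
  simp only [phi, ← mul_assoc, coeff_mul_X', mem_support0, mem_support1,
    mem_support2, e_sub0, e_sub1, e_sub2]
  norm_num



lemma phi_symIdeal {x : MvPolynomial (Fin 3) (ZMod 2)} (hx : x ∈ symIdeal) : phi x = 0 := by
  rw [symIdeal, show ({X 0 + X 1 + X 2,
               X 0 * X 1 + X 0 * X 2 + X 1 * X 2,
               X 0 * X 1 * X 2} : Set (MvPolynomial (Fin 3) (ZMod 2))) =
      insert (X 0 + X 1 + X 2) {X 0 * X 1 + X 0 * X 2 + X 1 * X 2, X 0 * X 1 * X 2} from rfl,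
    Ideal.mem_span_insert] at hx
  obtain ⟨a, z, hz, rfl⟩ := hx
  rw [show ({X 0 * X 1 + X 0 * X 2 + X 1 * X 2, X 0 * X 1 * X 2} :
        Set (MvPolynomial (Fin 3) (ZMod 2))) =
      insert (X 0 * X 1 + X 0 * X 2 + X 1 * X 2) {X 0 * X 1 * X 2} from rfl,
    Ideal.mem_span_insert] at hz
  obtain ⟨b, w, hw, rfl⟩ := hz
  rw [Ideal.mem_span_singleton'] at hw
  obtain ⟨c, rfl⟩ := hw
  rw [phi_add, phi_add, phi_g1, phi_g2, phi_g3]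
  ring

lemma mono_eq (a b c : ℕ) :
    (X 0 ^ a * X 1 ^ b * X 2 ^ c : MvPolynomial (Fin 3) (ZMod 2)) = monomial (e a b c) 1 := by
  rw [X_pow_eq_monomial, X_pow_eq_monomial, X_pow_eq_monomial, monomial_mul, monomial_mul, e]
  norm_num

lemma mem_g1 : (X 0 + X 1 + X 2 : MvPolynomial (Fin 3) (ZMod 2)) ∈ symIdeal :=
  Ideal.subset_span (by simp)
lemma mem_g2 : (X 0 * X 1 + X 0 * X 2 + X 1 * X 2 : MvPolynomial (Fin 3) (ZMod 2)) ∈ symIdeal :=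
  Ideal.subset_span (by simp)
lemma mem_g3 : (X 0 * X 1 * X 2 : MvPolynomial (Fin 3) (ZMod 2)) ∈ symIdeal :=
  Ideal.subset_span (by simp)

lemma two_eq_zero : (2 : MvPolynomial (Fin 3) (ZMod 2)) = 0 := by
  have : (2 : MvPolynomial (Fin 3) (ZMod 2)) = C 2 := by
    rw [map_ofNat]
  rw [this, show (2 : ZMod 2) = 0 from rfl, C_0]

lemma cube0 : (X 0 : MvPolynomial (Fin 3) (ZMod 2)) ^ 3 ∈ symIdeal := by
  have key : (X 0 : MvPolynomial (Fin 3) (ZMod 2)) ^ 3 =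
      X 0 ^ 2 * (X 0 + X 1 + X 2) + X 0 * (X 0 * X 1 + X 0 * X 2 + X 1 * X 2) +
      X 0 * X 1 * X 2 := by
    linear_combination (-(X 0 ^ 2 * X 1 + X 0 ^ 2 * X 2 + X 0 * X 1 * X 2)) * two_eq_zero
  rw [key]
  exact add_mem (add_mem (Ideal.mul_mem_left _ _ mem_g1) (Ideal.mul_mem_left _ _ mem_g2)) mem_g3

lemma cube1 : (X 1 : MvPolynomial (Fin 3) (ZMod 2)) ^ 3 ∈ symIdeal := by
  have key : (X 1 : MvPolynomial (Fin 3) (ZMod 2)) ^ 3 =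
      X 1 ^ 2 * (X 0 + X 1 + X 2) + X 1 * (X 0 * X 1 + X 0 * X 2 + X 1 * X 2) +
      X 0 * X 1 * X 2 := by
    linear_combination (-(X 0 * X 1 ^ 2 + X 1 ^ 2 * X 2 + X 0 * X 1 * X 2)) * two_eq_zero
  rw [key]
  exact add_mem (add_mem (Ideal.mul_mem_left _ _ mem_g1) (Ideal.mul_mem_left _ _ mem_g2)) mem_g3

lemma cube2 : (X 2 : MvPolynomial (Fin 3) (ZMod 2)) ^ 3 ∈ symIdeal := by
  have key : (X 2 : MvPolynomial (Fin 3) (ZMod 2)) ^ 3 =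
      X 2 ^ 2 * (X 0 + X 1 + X 2) + X 2 * (X 0 * X 1 + X 0 * X 2 + X 1 * X 2) +
      X 0 * X 1 * X 2 := by
    linear_combination (-(X 0 * X 2 ^ 2 + X 1 * X 2 ^ 2 + X 0 * X 1 * X 2)) * two_eq_zero
  rw [key]
  exact add_mem (add_mem (Ideal.mul_mem_left _ _ mem_g1) (Ideal.mul_mem_left _ _ mem_g2)) mem_g3

lemma ne_zero_of_phi {m : MvPolynomial (Fin 3) (ZMod 2)} (h : phi m ≠ 0) :
    Ideal.Quotient.mk symIdeal m ≠ 0 := fun h0 =>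
  h (phi_symIdeal (Ideal.Quotient.eq_zero_iff_mem.mp h0))

/-- Theta-foam evaluation: for `k1 + k2 + k3 = 3`, the image of
`u1^k1 · u2^k2 · u3^k3` in `R = F2[u1,u2,u3]/(e1,e2,e3)` is nonzero iff
`(k1,k2,k3)` is a permutation of `(0,1,2)`. -/
theorem stmt4 (k1 k2 k3 : ℕ) (h : k1 + k2 + k3 = 3) :
    Ideal.Quotient.mk symIdeal (X 0 ^ k1 * X 1 ^ k2 * X 2 ^ k3) ≠ 0 ↔
      ({k1, k2, k3} : Multiset ℕ) = ({0, 1, 2} : Multiset ℕ) := by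
  have hk1 : k1 ≤ 3 := by omega
  have hk2 : k2 ≤ 3 := by omega
  have hk3 : k3 ≤ 3 := by omega
  interval_cases k1 <;> interval_cases k2 <;> interval_cases k3 <;> first
  | omega
  | (refine iff_of_false (not_not_intro ?_) (by decide)
     rw [Ideal.Quotient.eq_zero_iff_mem]
     first
     | simpa using cube0
     | simpa using cube1
     | simpa using cube2
     | simpa using mem_g3)
  | (refine iff_of_true (ne_zero_of_phi ?_) (by decide)
     rw [mono_eq]
     simp [phi, coeff_monomial, e_eq_iff])
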